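/- Let a₀, a₁ ∈ ℂ with |a₀|² + |a₁|² = 1, let e₀, e₁ be the standard basis of ℂ², let w₀, w₁ be d×d unitary matrices, let (vₙ)ₙ be an orthonormal basis of ℂ^d and cₙ ≥ 0 with ∑ₙ cₙ = 1. For each n set ψₙ = a₀ • (e₀ ⊗ w₀.mulVec vₙ) + a₁ • (e₁ ⊗ w₁.mulVec vₙ), and let σ = ∑ₙ cₙ • Matrix.vecMulVec ψₙ (star ψₙ). Assume the strict orthogonality condition: for all n, m with cₙ ≠ 0 and cₘ ≠ 0, star (w₀.mulVec vₙ) ⬝ᵥ (w₁.mulVec vₘ) = 0. Let M be the partial transpose of σ with respect to the first factor, M((i,a),(j,b)) = σ((j,a),(i,b)). Then M is Hermitian and the sum of its negative eigenvalues equals −|a₀·a₁|; i.e. the negativity of the evolved qubit–environment state equals |a₀a₁|, independently of the dimension d and of the weights cₙ. -/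

import Mathlib

open Matrix ComplexOrder

/-- The Kronecker (tensor) product of two vectors: `(u ⊗ v) (i,a) = u i * v a`. -/
def vecKron {m n : Type*} (u : m → ℂ) (v : n → ℂ) : m × n → ℂ :=
  fun p => u p.1 * v p.2

lemma vv_mul_vv {ι : Type*} [Fintype ι] (a b x y : ι → ℂ) :
    vecMulVec a b * vecMulVec x y = (b ⬝ᵥ x) • vecMulVec a y := by
  ext p q
  simp only [mul_apply, vecMulVec_apply, Matrix.smul_apply, dotProduct, smul_eq_mul, Finset.sum_mul]
  exact Finset.sum_congr rfl fun k _ => by ring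

lemma dot_star_comm {ι : Type*} [Fintype ι] (x y : ι → ℂ) :
    star x ⬝ᵥ y = star (star y ⬝ᵥ x) := by
  simp only [dotProduct, star_sum, star_mul', star_star, Pi.star_apply]
  exact Finset.sum_congr rfl fun k _ => mul_comm _ _

lemma trace_vv {ι : Type*} [Fintype ι] [DecidableEq ι] (x : ι → ℂ) :
    (vecMulVec x (star x)).trace = star x ⬝ᵥ x := by
  simp only [trace, diag, vecMulVec_apply, dotProduct, Pi.star_apply]
  exact Finset.sum_congr rfl fun k _ => mul_comm _ _

lemma psd_smul_vv {ι : Type*} [Fintype ι] (r : ℝ) (hr : 0 ≤ r) (x : ι → ℂ) :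
    (((r : ℂ)) • vecMulVec x (star x)).PosSemidef := by
  rw [posSemidef_iff_dotProduct_mulVec]
  constructor
  · ext p q
    simp only [conjTranspose_apply, Matrix.smul_apply, vecMulVec_apply, Pi.star_apply, smul_eq_mul,
      star_mul', star_star, Complex.star_def, Complex.conj_ofReal]
    ring_nf
    simp [mul_comm, mul_left_comm]
  · intro z
    have h1 : (vecMulVec x (star x)) *ᵥ z = (star x ⬝ᵥ z) • x := by
      ext p
      simp only [mulVec, dotProduct, vecMulVec_apply, Pi.smul_apply, Pi.star_apply, smul_eq_mul]
      rw [Finset.sum_mul]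
      exact Finset.sum_congr rfl fun k _ => by ring
    rw [smul_mulVec, h1, dotProduct_smul, dotProduct_smul]
    have h2 : star z ⬝ᵥ x = star (star x ⬝ᵥ z) := dot_star_comm z x
    rw [h2, smul_eq_mul, smul_eq_mul]
    have := mul_star_self_nonneg (star x ⬝ᵥ z)
    have hr' : (0:ℂ) ≤ (r:ℂ) := by exact_mod_cast hr
    calc (0:ℂ) = (r:ℂ) * 0 := by ring
    _ ≤ (r:ℂ) * ((star x ⬝ᵥ z) * star (star x ⬝ᵥ z)) := by
        exact mul_le_mul_of_nonneg_left this hr'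

lemma star_vecKron_dot {m n : Type*} [Fintype m] [Fintype n]
    (p q : m → ℂ) (x y : n → ℂ) :
    star (vecKron p x) ⬝ᵥ vecKron q y = (star p ⬝ᵥ q) * (star x ⬝ᵥ y) := by
  simp only [dotProduct, vecKron, Pi.star_apply, Fintype.sum_prod_type, Finset.sum_mul_sum]
  refine Finset.sum_congr rfl fun i _ => Finset.sum_congr rfl fun a _ => ?_
  simp only [star_mul']
  ring

lemma sq_add_eq_sq_sub {R : Type*} [Ring R] (X Y : R) (h1 : X * Y = 0) (h2 : Y * X = 0) :
    (X + Y) ^ 2 = (X - Y) ^ 2 := by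
  rw [pow_two, pow_two, add_mul, mul_add, mul_add, sub_mul, mul_sub, mul_sub, h1, h2]
  abel

lemma conj_mul_conj {ι : Type*} [Fintype ι] [DecidableEq ι] (U D E : Matrix ι ι ℂ) (h : star U * U = 1) :
    (U * D * star U) * (U * E * star U) = U * (D * E) * star U := by
  rw [mul_assoc (U * D), ← mul_assoc (star U), ← mul_assoc (star U), h, one_mul,
    ← mul_assoc, mul_assoc U D E]

lemma sum_min_eigenvalues_eq {ι : Type*} [Fintype ι] [DecidableEq ι] {M A B : Matrix ι ι ℂ}
    (hA : A.PosSemidef) (hB : B.PosSemidef) (hAB : A * B = 0)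
    (hMeq : M = A - B) (hM : M.IsHermitian) :
    ∑ k, min (hM.eigenvalues k) 0 = -(B.trace.re) := by
  subst hMeq
  have hBA : B * A = 0 := by
    calc B * A = Bᴴ * Aᴴ := by rw [hA.1.eq, hB.1.eq]
    _ = (A * B)ᴴ := by rw [conjTranspose_mul]
    _ = 0 := by rw [hAB, conjTranspose_zero]
  set lam := hM.eigenvalues with hlam
  set U : Matrix ι ι ℂ := (hM.eigenvectorUnitary : Matrix ι ι ℂ) with hU
  have hUU' : star U * U = 1 := (Matrix.mem_unitaryGroup_iff').mp hM.eigenvectorUnitary.2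
  have hspec : A - B = U * diagonal (RCLike.ofReal ∘ lam) * star U := hM.spectral_theorem
  set p : ι → ℝ := fun k => max (lam k) 0 with hp
  set m : ι → ℝ := fun k => -(min (lam k) 0) with hm
  set A' : Matrix ι ι ℂ := U * diagonal (fun k => ((p k : ℝ) : ℂ)) * star U with hA'
  set B' : Matrix ι ι ℂ := U * diagonal (fun k => ((m k : ℝ) : ℂ)) * star U with hB'
  have hdiag : (RCLike.ofReal ∘ lam : ι → ℂ)
      = fun k => ((p k : ℝ) : ℂ) - ((m k : ℝ) : ℂ) := by
    funext k
    have hco : (RCLike.ofReal : ℝ → ℂ) = Complex.ofReal := rfl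
    simp only [Function.comp_apply, hco]
    rw [← Complex.ofReal_sub]
    norm_cast
    rw [hp, hm]
    simp only [sub_neg_eq_add]
    exact ((max_add_min (lam k) 0).trans (add_zero _)).symm
  have h1 : A - B = A' - B' := by
    rw [hspec, hdiag, ← diagonal_sub, mul_sub, sub_mul]
  have hpm : ∀ k, p k * m k = 0 := by
    intro k
    rcases le_total (lam k) 0 with h | h
    · simp [hp, hm, max_eq_right h]
    · simp [hp, hm, min_eq_right h]
  have hA'B' : A' * B' = 0 := by
    rw [hA', hB', conj_mul_conj _ _ _ hUU', diagonal_mul_diagonal]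
    have : (fun k => ((p k : ℝ):ℂ) * ((m k : ℝ):ℂ)) = (fun _ => (0 : ℂ)) := by
      funext k
      simp only [← Complex.ofReal_mul, hpm k, Complex.ofReal_zero]
    rw [this]
    simp
  have hB'A' : B' * A' = 0 := by
    rw [hA', hB', conj_mul_conj _ _ _ hUU', diagonal_mul_diagonal]
    have : (fun k => ((m k : ℝ):ℂ) * ((p k : ℝ):ℂ)) = (fun _ => (0 : ℂ)) := by
      funext k
      rw [← Complex.ofReal_mul, mul_comm, hpm k, Complex.ofReal_zero]
    rw [this]
    simp
  have hsq : (A + B) ^ 2 = (A' + B') ^ 2 := by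
    rw [sq_add_eq_sq_sub A B hAB hBA, sq_add_eq_sq_sub A' B' hA'B' hB'A', ← h1]
  have hApB : (A + B).PosSemidef := hA.add hB
  have hA'pB' : (A' + B').PosSemidef := by
    have hsum : A' + B' = U * diagonal (fun k => ((p k + m k : ℝ) : ℂ)) * star U := by
      rw [hA', hB', ← add_mul, ← mul_add, diagonal_add]
      congr 2
      funext k
      push_cast
      ring
    have hDpsd : (diagonal (fun k => ((p k + m k : ℝ) : ℂ))).PosSemidef := by
      refine Matrix.PosSemidef.diagonal ?_
      intro k
      have hk : (0:ℝ) ≤ p k + m k := by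
        rcases le_total (lam k) 0 with h | h
        · simp only [hp, hm, max_eq_right h, min_eq_left h]; linarith
        · simp only [hp, hm, min_eq_right h, max_eq_left h]; linarith
      simpa using Complex.zero_le_real.mpr hk
    have := hDpsd.mul_mul_conjTranspose_same U
    rw [← Matrix.star_eq_conjTranspose] at this
    rwa [hsum]
  have heq : A + B = A' + B' := by
    open scoped MatrixOrder in
    exact (CFC.sq_eq_sq_iff (A + B) (A' + B') hApB.nonneg hA'pB'.nonneg).mp hsq
  have h2 : B + B = B' + B' := by
    calc B + B = (A + B) - (A - B) := by abel
    _ = (A' + B') - (A' - B') := by rw [heq, h1]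
    _ = B' + B' := by abel
  have hBB' : B = B' := by
    have h3 : (2:ℂ) • B = (2:ℂ) • B' := by
      rw [two_smul, two_smul]; exact h2
    exact smul_right_injective _ (two_ne_zero) h3
  have htr : B.trace = ∑ k, ((m k : ℝ) : ℂ) := by
    rw [hBB', hB', Matrix.trace_mul_cycle, hUU', Matrix.one_mul, Matrix.trace_diagonal]
  have hre : B.trace.re = ∑ k, m k := by
    rw [htr, ← Complex.ofReal_sum, Complex.ofReal_re]
  rw [hre, hm]
  rw [Finset.sum_neg_distrib]
  simp

/-- Strict distinguishability forces maximal negativity: for the evolved joint state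
`σ = ∑ₙ cₙ |ψₙ⟩⟨ψₙ|` with `ψₙ = a₀ (e₀ ⊗ w₀ vₙ) + a₁ (e₁ ⊗ w₁ vₙ)`, where
`|a₀|² + |a₁|² = 1`, `(vₙ)` is an orthonormal basis of `ℂ^d`, `cₙ ≥ 0` sum to 1,
`w₀, w₁` are unitary, and the strict orthogonality condition holds, the partial
transpose of `σ` with respect to the qubit factor is Hermitian and the sum of its
negative eigenvalues is `-|a₀ a₁|`: the negativity equals `|a₀ a₁|`, independently
of `d` and of the weights `cₙ`. -/
theorem stmt_15 {d : ℕ} (a₀ a₁ : ℂ)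
    (hnorm : ‖a₀‖ ^ 2 + ‖a₁‖ ^ 2 = 1)
    (w₀ w₁ : Matrix (Fin d) (Fin d) ℂ) (hw₀ : w₀ᴴ * w₀ = 1) (hw₁ : w₁ᴴ * w₁ = 1)
    (v : Fin d → (Fin d → ℂ))
    (hv : ∀ n m, star (v n) ⬝ᵥ v m = if n = m then 1 else 0)
    (c : Fin d → ℝ) (hc : ∀ n, 0 ≤ c n) (hcsum : ∑ n, c n = 1)
    (horth : ∀ n m, c n ≠ 0 → c m ≠ 0 →
      star (w₀.mulVec (v n)) ⬝ᵥ (w₁.mulVec (v m)) = 0) :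
    let ψ : Fin d → (Fin 2 × Fin d → ℂ) := fun n =>
      a₀ • vecKron (Pi.single 0 1 : Fin 2 → ℂ) (w₀.mulVec (v n))
        + a₁ • vecKron (Pi.single 1 1 : Fin 2 → ℂ) (w₁.mulVec (v n))
    let σ : Matrix (Fin 2 × Fin d) (Fin 2 × Fin d) ℂ :=
      ∑ n, (c n : ℂ) • Matrix.vecMulVec (ψ n) (star (ψ n))
    let M : Matrix (Fin 2 × Fin d) (Fin 2 × Fin d) ℂ := fun p q => σ (q.1, p.2) (p.1, q.2)
    ∃ hM : M.IsHermitian,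
      ∑ k, min (hM.eigenvalues k) 0 = -(‖a₀ * a₁‖) := by
  intro ψ σ M
  classical
  set u : Fin d → Fin d → ℂ := fun n => w₀.mulVec (v n) with hu_def
  set t : Fin d → Fin d → ℂ := fun n => w₁.mulVec (v n) with ht_def
  have hdotuu : ∀ n m, star (u n) ⬝ᵥ u m = if n = m then 1 else 0 := by
    intro n m
    rw [hu_def]
    rw [star_mulVec, ← dotProduct_mulVec, mulVec_mulVec, hw₀, one_mulVec, hv]
  have hdottt : ∀ n m, star (t n) ⬝ᵥ t m = if n = m then 1 else 0 := by
    intro n m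
    rw [ht_def]
    rw [star_mulVec, ← dotProduct_mulVec, mulVec_mulVec, hw₁, one_mulVec, hv]
  have hdotut : ∀ n m, c n ≠ 0 → c m ≠ 0 → star (u n) ⬝ᵥ t m = 0 := horth
  have hdottu : ∀ n m, c n ≠ 0 → c m ≠ 0 → star (t n) ⬝ᵥ u m = 0 := by
    intro n m hn hm
    rw [dot_star_comm, hdotut m n hm hn, star_zero]
  set E0 : Fin 2 → ℂ := Pi.single 0 1 with hE0
  set E1 : Fin 2 → ℂ := Pi.single 1 1 with hE1
  have hd00 : star E0 ⬝ᵥ E0 = 1 := by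
    simp [hE0, dotProduct, Fin.sum_univ_two, Pi.single_apply]
  have hd11 : star E1 ⬝ᵥ E1 = 1 := by
    simp [hE1, dotProduct, Fin.sum_univ_two, Pi.single_apply]
  have hd01 : star E0 ⬝ᵥ E1 = 0 := by
    simp [hE0, hE1, dotProduct, Fin.sum_univ_two, Pi.single_apply]
  have hd10 : star E1 ⬝ᵥ E0 = 0 := by
    simp [hE0, hE1, dotProduct, Fin.sum_univ_two, Pi.single_apply]
  set γ : ℝ := ‖a₀ * a₁‖ with hγ
  set φ : ℂ := (star a₀ * a₁) / (γ : ℂ) with hφ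
  have hφ1 : (γ : ℂ) * φ = star a₀ * a₁ := by
    by_cases h : a₀ * a₁ = 0
    · have h1 : γ = 0 := by rw [hγ, h]; simp
      have h2 : star a₀ * a₁ = 0 := by
        rcases mul_eq_zero.mp h with h' | h' <;> simp [h']
      rw [h1, h2, hφ, h1, h2]
      simp
    · have h1 : (γ : ℂ) ≠ 0 := by
        simp only [ne_eq, Complex.ofReal_eq_zero, hγ]
        simpa using h
      rw [hφ, mul_comm, div_mul_cancel₀ _ h1]
  have hφ2 : (γ : ℂ) * star φ = a₀ * star a₁ := by
    have := congrArg star hφ1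
    simpa [star_mul', mul_comm] using this
  have hφu : a₀ * a₁ ≠ 0 → star φ * φ = 1 := by
    intro h
    have h1 : (γ : ℂ) ≠ 0 := by
      simp only [ne_eq, Complex.ofReal_eq_zero, hγ]
      simpa using h
    have key : ((γ:ℂ) * star φ) * ((γ:ℂ) * φ) = (γ:ℂ) * (γ:ℂ) := by
      rw [hφ1, hφ2]
      have : (a₀ * star a₁) * (star a₀ * a₁) = (a₀ * a₁) * star (a₀ * a₁) := by
        simp only [star_mul']
        ring
      rw [this, Complex.star_def, Complex.mul_conj, ← Complex.ofReal_mul, hγ]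
      rw [← Complex.sq_norm]
      push_cast
      ring
    have h2 : (γ:ℂ) * (γ:ℂ) * (star φ * φ) = (γ:ℂ) * (γ:ℂ) * 1 := by
      calc (γ:ℂ) * (γ:ℂ) * (star φ * φ) = ((γ:ℂ) * star φ) * ((γ:ℂ) * φ) := by ring
      _ = (γ:ℂ) * (γ:ℂ) := key
      _ = (γ:ℂ) * (γ:ℂ) * 1 := by ring
    exact mul_left_cancel₀ (mul_ne_zero h1 h1) h2
  -- vectors
  set K0 : Fin d → (Fin 2 × Fin d → ℂ) := fun n => vecKron E0 (u n) with hK0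
  set K1 : Fin d → (Fin 2 × Fin d → ℂ) := fun n => vecKron E1 (t n) with hK1
  set Y : Fin d → (Fin 2 × Fin d → ℂ) := fun n => vecKron E1 (u n) with hY
  set Z : Fin d → (Fin 2 × Fin d → ℂ) := fun n => vecKron E0 (t n) with hZ
  set xp : Fin d → (Fin 2 × Fin d → ℂ) := fun n => Y n + φ • Z n with hxp
  set xm : Fin d → (Fin 2 × Fin d → ℂ) := fun n => Y n - φ • Z n with hxm
  set A : Matrix (Fin 2 × Fin d) (Fin 2 × Fin d) ℂ :=
      (∑ n, ((‖a₀‖ ^ 2 * c n : ℝ) : ℂ) • vecMulVec (K0 n) (star (K0 n)))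
    + (∑ n, ((‖a₁‖ ^ 2 * c n : ℝ) : ℂ) • vecMulVec (K1 n) (star (K1 n)))
    + (∑ n, ((γ * c n / 2 : ℝ) : ℂ) • vecMulVec (xp n) (star (xp n))) with hA
  set B : Matrix (Fin 2 × Fin d) (Fin 2 × Fin d) ℂ :=
      ∑ n, ((γ * c n / 2 : ℝ) : ℂ) • vecMulVec (xm n) (star (xm n)) with hB
  have hγ0 : 0 ≤ γ := by rw [hγ]; positivity
  have psum : ∀ (x : Fin d → (Fin 2 × Fin d → ℂ)) (r : Fin d → ℝ), (∀ n, 0 ≤ r n) →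
      (∑ n, ((r n : ℝ) : ℂ) • vecMulVec (x n) (star (x n))).PosSemidef := by
    intro x r hr
    refine Finset.sum_induction _ _ (fun a b ha hb => ha.add hb) Matrix.PosSemidef.zero ?_
    intro n _
    exact psd_smul_vv (r n) (hr n) (x n)
  have hApsd : A.PosSemidef := by
    rw [hA]
    refine ((psum K0 _ ?_).add (psum K1 _ ?_)).add (psum xp _ ?_)
    · intro n; exact mul_nonneg (by positivity) (hc n)
    · intro n; exact mul_nonneg (by positivity) (hc n)
    · intro n; exact div_nonneg (mul_nonneg hγ0 (hc n)) (by norm_num)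
  have hBpsd : B.PosSemidef := by
    rw [hB]
    exact psum xm _ fun n => div_nonneg (mul_nonneg hγ0 (hc n)) (by norm_num)
  have hB0 : a₀ * a₁ = 0 → B = 0 := by
    intro h
    have h1 : γ = 0 := by rw [hγ, h]; simp
    rw [hB]
    refine Finset.sum_eq_zero fun n _ => ?_
    rw [h1]
    norm_num
  have habs0 : ((‖a₀‖ : ℝ) : ℂ) ^ 2 = a₀ * star a₀ := by
    rw [Complex.star_def, Complex.mul_conj, ← Complex.ofReal_pow, Complex.sq_norm]
  have habs1 : ((‖a₁‖ : ℝ) : ℂ) ^ 2 = a₁ * star a₁ := by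
    rw [Complex.star_def, Complex.mul_conj, ← Complex.ofReal_pow, Complex.sq_norm]
  have hMeq : M = A - B := by
    ext p q
    obtain ⟨i, a⟩ := p
    obtain ⟨j, b⟩ := q
    simp only [M, σ, ψ, hA, hB, hK0, hK1, hxp, hxm, hY, hZ, hE0, hE1, hu_def, ht_def,
      Matrix.sub_apply, Matrix.add_apply, Matrix.sum_apply, Matrix.smul_apply,
      vecMulVec_apply, Pi.star_apply, smul_eq_mul, Pi.add_apply, Pi.sub_apply,
      Pi.smul_apply, vecKron, star_mul', star_add, star_sub, star_star]
    rw [← Finset.sum_add_distrib, ← Finset.sum_add_distrib, ← Finset.sum_sub_distrib]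
    refine Finset.sum_congr rfl fun n _ => ?_
    fin_cases i <;> fin_cases j <;>
      simp only [Pi.single_apply, if_true, if_false, Fin.zero_eta, Fin.mk_one,
        show ((0:Fin 2) = 1) = False by simp, show ((1:Fin 2) = 0) = False by simp,
        eq_self_iff_true, ite_true, ite_false, one_mul, zero_mul, mul_zero, mul_one,
        add_zero, zero_add, sub_zero, star_zero, star_one] <;> push_cast
    · linear_combination (-(↑(c n) * ((w₀ *ᵥ v n) a) * star ((w₀ *ᵥ v n) b))) * habs0
    · linear_combination (-(↑(c n) * ((w₁ *ᵥ v n) a) * star ((w₀ *ᵥ v n) b))) * hφ1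
    · linear_combination (-(↑(c n) * ((w₀ *ᵥ v n) a) * star ((w₁ *ᵥ v n) b))) * hφ2
    · linear_combination (-(↑(c n) * ((w₁ *ᵥ v n) a) * star ((w₁ *ᵥ v n) b))) * habs1
  have hYY : ∀ n m, star (Y n) ⬝ᵥ Y m = if n = m then 1 else 0 := by
    intro n m; simp only [hY]; rw [star_vecKron_dot, hd11, hdotuu, one_mul]
  have hZZ : ∀ n m, star (Z n) ⬝ᵥ Z m = if n = m then 1 else 0 := by
    intro n m; simp only [hZ]; rw [star_vecKron_dot, hd00, hdottt, one_mul]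
  have hYZ : ∀ n m, star (Y n) ⬝ᵥ Z m = 0 := by
    intro n m; simp only [hY, hZ]; rw [star_vecKron_dot, hd10, zero_mul]
  have hZY : ∀ n m, star (Z n) ⬝ᵥ Y m = 0 := by
    intro n m; simp only [hY, hZ]; rw [star_vecKron_dot, hd01, zero_mul]
  have hK0xm : ∀ n m, c n ≠ 0 → c m ≠ 0 → star (K0 n) ⬝ᵥ xm m = 0 := by
    intro n m hn hm
    simp only [hxm, hK0, hY, hZ]
    rw [dotProduct_sub, dotProduct_smul, star_vecKron_dot, star_vecKron_dot,
      hd01, hd00, hdotut n m hn hm, zero_mul, one_mul]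
    simp
  have hK1xm : ∀ n m, c n ≠ 0 → c m ≠ 0 → star (K1 n) ⬝ᵥ xm m = 0 := by
    intro n m hn hm
    simp only [hxm, hK1, hY, hZ]
    rw [dotProduct_sub, dotProduct_smul, star_vecKron_dot, star_vecKron_dot,
      hd11, hd10, hdottu n m hn hm, one_mul, zero_mul]
    simp
  have hxpxm : star φ * φ = 1 → ∀ n m, star (xp n) ⬝ᵥ xm m = 0 := by
    intro hφu' n m
    simp only [hxp, hxm, star_add, star_smul]
    rw [add_dotProduct, smul_dotProduct, dotProduct_sub, dotProduct_smul,
      dotProduct_sub, dotProduct_smul, hYY, hYZ, hZY, hZZ]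
    simp only [smul_eq_mul, mul_zero, sub_zero, zero_sub, mul_neg]
    rw [← mul_assoc, hφu', one_mul]
    ring
  have hAB : A * B = 0 := by
    by_cases hdeg : a₀ * a₁ = 0
    · rw [hB0 hdeg, mul_zero]
    · have hφu' := hφu hdeg
      have key : ∀ (x : Fin d → (Fin 2 × Fin d → ℂ)) (r : Fin d → ℝ),
          (∀ n m, c n ≠ 0 → c m ≠ 0 → star (x n) ⬝ᵥ xm m = 0) →
          (∀ n, c n = 0 → r n = 0) →
          (∑ n, ((r n : ℝ):ℂ) • vecMulVec (x n) (star (x n))) *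
            (∑ m, ((γ * c m / 2 : ℝ):ℂ) • vecMulVec (xm m) (star (xm m))) = 0 := by
        intro x r hx hr
        rw [Finset.sum_mul_sum]
        refine Finset.sum_eq_zero fun n _ => Finset.sum_eq_zero fun m _ => ?_
        rw [smul_mul_assoc, mul_smul_comm, vv_mul_vv]
        by_cases hn : c n = 0
        · rw [hr n hn]; simp
        · by_cases hm : c m = 0
          · rw [hm]; norm_num
          · rw [hx n m hn hm]; simp
      rw [hA, hB, add_mul, add_mul]
      rw [key K0 _ (fun n m hn hm => hK0xm n m hn hm) (fun n hn => by rw [hn, mul_zero]),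
        key K1 _ (fun n m hn hm => hK1xm n m hn hm) (fun n hn => by rw [hn, mul_zero]),
        key xp _ (fun n m _ _ => hxpxm hφu' n m) (fun n hn => by rw [hn]; ring)]
      simp
  have htrB : B.trace.re = γ := by
    by_cases hdeg : a₀ * a₁ = 0
    · rw [hB0 hdeg, Matrix.trace_zero]
      rw [hγ, hdeg]
      simp
    · have hφu' := hφu hdeg
      have h1 : B.trace = ∑ n, ((γ * c n : ℝ) : ℂ) := by
        rw [hB, Matrix.trace_sum]
        refine Finset.sum_congr rfl fun n _ => ?_
        rw [Matrix.trace_smul, trace_vv]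
        have h2 : star (xm n) ⬝ᵥ xm n = 2 := by
          simp only [hxm, star_sub, star_smul]
          rw [sub_dotProduct, smul_dotProduct, dotProduct_sub, dotProduct_smul,
            dotProduct_sub, dotProduct_smul, hYY, hYZ, hZY, hZZ]
          simp only [if_pos rfl, smul_eq_mul, mul_zero, sub_zero, zero_sub, mul_neg, mul_one]
          rw [← mul_assoc, hφu', one_mul]
          norm_num
        rw [h2, smul_eq_mul]
        push_cast
        ring
      rw [h1, ← Complex.ofReal_sum, Complex.ofReal_re, ← Finset.mul_sum, hcsum, mul_one]
  have hM : M.IsHermitian := by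
    rw [hMeq]; exact hApsd.1.sub hBpsd.1
  refine ⟨hM, ?_⟩
  rw [sum_min_eigenvalues_eq hApsd hBpsd hAB hMeq hM, htrB]
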